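/- (Abstract form of Theorem 2, L² estimate.) For every choice of constants c_a, C₁, C₂, C₃, C₄ ≥ 0 there exist constants C > 0 and c₀ > 0, depending only on c_a, C₁, C₂, C₃, C₄, with the following property. Let k ≥ 1 be a natural number, let h > 0, ε ≥ 0, M ≥ 0, let u ∈ X, πu ∈ V_h, and (u_h, z_h) ∈ V_h × W_h. Assume: (i) Galerkin orthogonality: a_h(u − u_h, w_h) = s_a(z_h, w_h) for all w_h ∈ W_h, and a_h(v_h, z_h) = s_p(u_h − u, v_h) for all v_h ∈ V_h; (ii) there exist φ ∈ X and p ∈ W_h (a dual solution with data u − u_h and its interpolant) with a_h(u − u_h, φ) = ‖u − u_h‖², a_h(u − u_h, φ − p) ≤ C₁ h ‖u − u_h‖ · ( c_a C₃ h^k M + c_a |πu − u_h|_{S_p} + ε ‖u − u_h‖ ), and |p|_{S_a} ≤ C₂ h ‖u − u_h‖; (iii) there exist ψ ∈ X and q ∈ V_h with a_h(ψ, z_h) = ‖z_h‖², a_h(ψ − q, z_h) ≤ C₁ h ‖z_h‖ · ( c_a |z_h|_{S_a} + ε ‖z_h‖ ), and |q|_{S_p} ≤ C₂ h ‖z_h‖;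 (iv) interpolation: |u − πu|_{S_p} ≤ C₃ h^k M; (v) stabilisation bounds: |πu − u_h|_{S_p} + |z_h|_{S_a} ≤ C₄ ( h^k M + ε ‖z_h‖ ). If h·ε ≤ c₀, then ‖u − u_h‖ + ‖z_h‖ ≤ C h^{k+1} M. -/

import Mathlib

open scoped RealInnerProductSpace

/-- Cauchy–Schwarz for a symmetric positive semidefinite bilinear form. -/
lemma bilin_cauchy_schwarz {X : Type*} [AddCommGroup X] [Module ℝ X]
    (B : LinearMap.BilinForm ℝ X)
    (hsymm : ∀ x y : X, B x y = B y x) (hpos : ∀ x : X, 0 ≤ B x x) (x y : X) :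
    B x y ≤ Real.sqrt (B x x) * Real.sqrt (B y y) := by
  have key : ∀ t : ℝ, 0 ≤ B y y * (t * t) + (2 * B x y) * t + B x x := by
    intro t
    have h0 := hpos (x + t • y)
    have hxy := hsymm y x
    simp only [map_add, map_smul, LinearMap.add_apply, LinearMap.smul_apply,
      smul_eq_mul] at h0
    rw [hxy] at h0
    linarith [h0]
  have hd := discrim_le_zero key
  rw [discrim] at hd
  have h1 : (B x y) ^ 2 ≤ B x x * B y y := by nlinarith
  calc B x y ≤ |B x y| := le_abs_self _
    _ = Real.sqrt ((B x y) ^ 2) := (Real.sqrt_sq_eq_abs _).symm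
    _ ≤ Real.sqrt (B x x * B y y) := Real.sqrt_le_sqrt h1
    _ = _ := Real.sqrt_mul (hpos x) _

/-- The purely real-arithmetic core of the `L²` estimate. -/
lemma real_alg (c_a C₁ C₂ C₃ C₄ h ε A E Z S T I K : ℝ)
    (hca : 0 ≤ c_a) (hC1 : 0 ≤ C₁) (hC2 : 0 ≤ C₂) (hC3 : 0 ≤ C₃) (hC4 : 0 ≤ C₄)
    (hh : 0 ≤ h) (hε : 0 ≤ ε) (hA : 0 ≤ A) (hE0 : 0 ≤ E) (hZ0 : 0 ≤ Z)
    (hS0 : 0 ≤ S) (hT0 : 0 ≤ T) (hI0 : 0 ≤ I)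
    (hKdef : K = C₁ * c_a * C₃ + C₁ * c_a * C₄ + C₁ + C₂ * C₄ + C₂ * C₃ + 1)
    (hE : E ≤ C₁ * h * (c_a * (C₃ * A) + c_a * S + ε * E) + C₂ * h * T)
    (hZ : Z ≤ C₁ * h * (c_a * T + ε * Z) + C₂ * h * (S + I))
    (hI : I ≤ C₃ * A)
    (hST : S + T ≤ C₄ * (A + ε * Z))
    (hsmall : h * ε ≤ 1 / (4 * K)) :
    E + Z ≤ 4 * K * (h * A) := by
  have n1 : 0 ≤ C₁ * c_a * C₃ := mul_nonneg (mul_nonneg hC1 hca) hC3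
  have n2 : 0 ≤ C₁ * c_a * C₄ := mul_nonneg (mul_nonneg hC1 hca) hC4
  have n3 : 0 ≤ C₂ * C₄ := mul_nonneg hC2 hC4
  have n4 : 0 ≤ C₂ * C₃ := mul_nonneg hC2 hC3
  have hK1 : 1 ≤ K := by rw [hKdef]; linarith
  have hK0 : 0 < K := by linarith
  have hS : S ≤ C₄ * (A + ε * Z) := by linarith
  have hT : T ≤ C₄ * (A + ε * Z) := by linarith
  have hKε : K * (h * ε) ≤ 1 / 4 := by
    have h2 := mul_le_mul_of_nonneg_left hsmall hK0.le
    have h3 : K * (1 / (4 * K)) = 1 / 4 := by field_simp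
    linarith
  have hhA : (0:ℝ) ≤ h * A := mul_nonneg hh hA
  have hhεZ : (0:ℝ) ≤ h * ε * Z := mul_nonneg (mul_nonneg hh hε) hZ0
  have hhεE : (0:ℝ) ≤ h * ε * E := mul_nonneg (mul_nonneg hh hε) hE0
  have hKhA : 0 ≤ K * (h * A) := mul_nonneg hK0.le hhA
  have eA : K * (h * A)
      = (C₁ * c_a * C₃ + C₁ * c_a * C₄ + C₁ + C₂ * C₄ + C₂ * C₃ + 1) * (h * A) := by
    rw [hKdef]
  have eZ : K * (h * ε) * Z
      = (C₁ * c_a * C₃ + C₁ * c_a * C₄ + C₁ + C₂ * C₄ + C₂ * C₃ + 1) * (h * ε * Z) := by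
    rw [hKdef]; ring
  have eE : K * (h * ε) * E
      = (C₁ * c_a * C₃ + C₁ * c_a * C₄ + C₁ + C₂ * C₄ + C₂ * C₃ + 1) * (h * ε * E) := by
    rw [hKdef]; ring
  -- step b : Z bound
  have hb : Z ≤ K * (h * A) + K * (h * ε) * Z := by
    have t1 : (C₁ * c_a) * (h * T) ≤ (C₁ * c_a) * (h * (C₄ * (A + ε * Z))) :=
      mul_le_mul_of_nonneg_left (mul_le_mul_of_nonneg_left hT hh) (mul_nonneg hC1 hca)
    have t2 : C₂ * (h * S) ≤ C₂ * (h * (C₄ * (A + ε * Z))) :=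
      mul_le_mul_of_nonneg_left (mul_le_mul_of_nonneg_left hS hh) hC2
    have t3 : C₂ * (h * I) ≤ C₂ * (h * (C₃ * A)) :=
      mul_le_mul_of_nonneg_left (mul_le_mul_of_nonneg_left hI hh) hC2
    have p1 : 0 ≤ (C₁ * c_a * C₃ + C₁ + 1) * (h * A) :=
      mul_nonneg (by linarith) hhA
    have p2 : 0 ≤ (C₁ * c_a * C₃ + C₂ * C₃ + 1) * (h * ε * Z) :=
      mul_nonneg (by linarith) hhεZ
    linarith [hZ, t1, t2, t3, p1, p2, eA, eZ]
  have hKεZ : K * (h * ε) * Z ≤ (1 / 4) * Z := mul_le_mul_of_nonneg_right hKε hZ0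
  have hZ2 : Z ≤ 2 * (K * (h * A)) := by linarith [hb, hKεZ, hKhA]
  -- step a : E bound
  have ha : E ≤ K * (h * A) + K * (h * ε) * Z + K * (h * ε) * E := by
    have s1 : (C₁ * c_a) * (h * S) ≤ (C₁ * c_a) * (h * (C₄ * (A + ε * Z))) :=
      mul_le_mul_of_nonneg_left (mul_le_mul_of_nonneg_left hS hh) (mul_nonneg hC1 hca)
    have s2 : C₂ * (h * T) ≤ C₂ * (h * (C₄ * (A + ε * Z))) :=
      mul_le_mul_of_nonneg_left (mul_le_mul_of_nonneg_left hT hh) hC2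
    have p1 : 0 ≤ (C₁ + C₂ * C₃ + 1) * (h * A) := mul_nonneg (by linarith) hhA
    have p2 : 0 ≤ (C₁ * c_a * C₃ + C₁ + C₂ * C₃ + 1) * (h * ε * Z) :=
      mul_nonneg (by linarith) hhεZ
    have p3 : 0 ≤ (C₁ * c_a * C₃ + C₁ * c_a * C₄ + C₂ * C₄ + C₂ * C₃ + 1) * (h * ε * E) :=
      mul_nonneg (by linarith) hhεE
    linarith [hE, s1, s2, p1, p2, p3, eA, eZ, eE]
  have hKεE : K * (h * ε) * E ≤ (1 / 4) * E := mul_le_mul_of_nonneg_right hKε hE0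
  linarith

/-- Abstract form of Theorem 2, `L²` estimate: under Galerkin orthogonality,
duality (regularity of the adjoint problem), interpolation and stabilisation
bounds, and for `h·ε` small enough, `‖u − u_h‖ + ‖z_h‖ ≤ C h^{k+1} M`. -/
theorem L2_error_estimate
    {X : Type*} [NormedAddCommGroup X] [InnerProductSpace ℝ X]
    (V W : Submodule ℝ X)
    (a_h s_p s_a : LinearMap.BilinForm ℝ X)
    (hsp_symm : ∀ x y : X, s_p x y = s_p y x)
    (hsa_symm : ∀ x y : X, s_a x y = s_a y x)
    (hsp_pos : ∀ x : X, 0 ≤ s_p x x)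
    (hsa_pos : ∀ x : X, 0 ≤ s_a x x) :
    ∀ c_a C₁ C₂ C₃ C₄ : ℝ, 0 ≤ c_a → 0 ≤ C₁ → 0 ≤ C₂ → 0 ≤ C₃ → 0 ≤ C₄ →
    ∃ C > (0 : ℝ), ∃ c₀ > (0 : ℝ),
      ∀ (k : ℕ), 1 ≤ k →
      ∀ (h ε M : ℝ), 0 < h → 0 ≤ ε → 0 ≤ M →
      ∀ (u πu u_h z_h : X), πu ∈ V → u_h ∈ V → z_h ∈ W →
      -- (i) Galerkin orthogonality
      (∀ w_h ∈ W, a_h (u - u_h) w_h = s_a z_h w_h) →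
      (∀ v_h ∈ V, a_h v_h z_h = s_p (u_h - u) v_h) →
      -- (ii) dual problem with data `u − u_h`
      (∃ φ : X, ∃ p ∈ W,
        a_h (u - u_h) φ = ‖u - u_h‖ ^ 2 ∧
        a_h (u - u_h) (φ - p)
          ≤ C₁ * h * ‖u - u_h‖ *
              (c_a * (C₃ * h ^ k * M)
                + c_a * Real.sqrt (s_p (πu - u_h) (πu - u_h))
                + ε * ‖u - u_h‖) ∧
        Real.sqrt (s_a p p) ≤ C₂ * h * ‖u - u_h‖) →
      -- (iii) primal problem with data `z_h`
      (∃ ψ : X, ∃ q ∈ V,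
        a_h ψ z_h = ‖z_h‖ ^ 2 ∧
        a_h (ψ - q) z_h
          ≤ C₁ * h * ‖z_h‖ * (c_a * Real.sqrt (s_a z_h z_h) + ε * ‖z_h‖) ∧
        Real.sqrt (s_p q q) ≤ C₂ * h * ‖z_h‖) →
      -- (iv) interpolation bound
      Real.sqrt (s_p (u - πu) (u - πu)) ≤ C₃ * h ^ k * M →
      -- (v) stabilisation bounds
      Real.sqrt (s_p (πu - u_h) (πu - u_h)) + Real.sqrt (s_a z_h z_h)
        ≤ C₄ * (h ^ k * M + ε * ‖z_h‖) →
      -- smallness of `h·ε`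
      h * ε ≤ c₀ →
      ‖u - u_h‖ + ‖z_h‖ ≤ C * h ^ (k + 1) * M := by
  intro c_a C₁ C₂ C₃ C₄ hca hC1 hC2 hC3 hC4
  set K := C₁ * c_a * C₃ + C₁ * c_a * C₄ + C₁ + C₂ * C₄ + C₂ * C₃ + 1 with hKdef
  have hK0 : 0 < K := by
    have n1 : 0 ≤ C₁ * c_a * C₃ := mul_nonneg (mul_nonneg hC1 hca) hC3
    have n2 : 0 ≤ C₁ * c_a * C₄ := mul_nonneg (mul_nonneg hC1 hca) hC4
    have n3 : 0 ≤ C₂ * C₄ := mul_nonneg hC2 hC4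
    have n4 : 0 ≤ C₂ * C₃ := mul_nonneg hC2 hC3
    rw [hKdef]; linarith
  refine ⟨4 * K, by linarith, 1 / (4 * K), by positivity, ?_⟩
  intro k hk h ε M hh hε hM u πu u_h z_h hπu hu_h hz_hW hGO1 hGO2 hdual hprim hinterp hstab hsmall
  obtain ⟨φ, p, hpW, hφ1, hφ2, hφ3⟩ := hdual
  obtain ⟨ψ, q, hqV, hψ1, hψ2, hψ3⟩ := hprim
  -- abbreviations
  have hE0 : (0:ℝ) ≤ ‖u - u_h‖ := norm_nonneg _
  have hZ0 : (0:ℝ) ≤ ‖z_h‖ := norm_nonneg _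
  have hS0 : (0:ℝ) ≤ Real.sqrt (s_p (πu - u_h) (πu - u_h)) := Real.sqrt_nonneg _
  have hT0 : (0:ℝ) ≤ Real.sqrt (s_a z_h z_h) := Real.sqrt_nonneg _
  have hI0 : (0:ℝ) ≤ Real.sqrt (s_p (u - πu) (u - πu)) := Real.sqrt_nonneg _
  have hA0 : (0:ℝ) ≤ h ^ k * M := by positivity
  -- E estimate : ‖u - u_h‖ ≤ R_E
  have hsap : s_a z_h p ≤ Real.sqrt (s_a z_h z_h) * (C₂ * h * ‖u - u_h‖) := by
    calc s_a z_h p ≤ Real.sqrt (s_a z_h z_h) * Real.sqrt (s_a p p) :=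
          bilin_cauchy_schwarz s_a hsa_symm hsa_pos z_h p
      _ ≤ _ := mul_le_mul_of_nonneg_left hφ3 hT0
  have hsplitE : (‖u - u_h‖ : ℝ) ^ 2 = a_h (u - u_h) (φ - p) + s_a z_h p := by
    rw [← hGO1 p hpW, ← hφ1, map_sub (a_h (u - u_h)) φ p]; ring
  have hE : ‖u - u_h‖ ≤ C₁ * h * (c_a * (C₃ * (h ^ k * M))
      + c_a * Real.sqrt (s_p (πu - u_h) (πu - u_h)) + ε * ‖u - u_h‖)
      + C₂ * h * Real.sqrt (s_a z_h z_h) := by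
    have hR0 : 0 ≤ C₁ * h * (c_a * (C₃ * (h ^ k * M))
        + c_a * Real.sqrt (s_p (πu - u_h) (πu - u_h)) + ε * ‖u - u_h‖)
        + C₂ * h * Real.sqrt (s_a z_h z_h) := by
      have := mul_nonneg (mul_nonneg hC1 hh.le)
        (add_nonneg (add_nonneg (mul_nonneg hca (mul_nonneg hC3 hA0))
          (mul_nonneg hca hS0)) (mul_nonneg hε hE0))
      have := mul_nonneg (mul_nonneg hC2 hh.le) hT0
      linarith
    rcases eq_or_lt_of_le hE0 with h0 | h0
    · linarith
    · have hmul : ‖u - u_h‖ * ‖u - u_h‖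
          ≤ ‖u - u_h‖ * (C₁ * h * (c_a * (C₃ * (h ^ k * M))
            + c_a * Real.sqrt (s_p (πu - u_h) (πu - u_h)) + ε * ‖u - u_h‖)
            + C₂ * h * Real.sqrt (s_a z_h z_h)) := by linarith [hsplitE, hφ2, hsap]
      exact le_of_mul_le_mul_left hmul h0
  -- Z estimate
  have hqle : s_p (u_h - u) q
      ≤ (Real.sqrt (s_p (πu - u_h) (πu - u_h)) + Real.sqrt (s_p (u - πu) (u - πu)))
        * (C₂ * h * ‖z_h‖) := by
    have hsplit : s_p (u_h - u) q = s_p (u_h - πu) q + s_p (πu - u) q := by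
      have : u_h - u = (u_h - πu) + (πu - u) := by abel
      rw [this, map_add, LinearMap.add_apply]
    have e1 : s_p (u_h - πu) (u_h - πu) = s_p (πu - u_h) (πu - u_h) := by
      rw [show u_h - πu = -(πu - u_h) by abel]
      simp only [map_neg, LinearMap.neg_apply, neg_neg]
    have e2 : s_p (πu - u) (πu - u) = s_p (u - πu) (u - πu) := by
      rw [show πu - u = -(u - πu) by abel]
      simp only [map_neg, LinearMap.neg_apply, neg_neg]
    have c1 := bilin_cauchy_schwarz s_p hsp_symm hsp_pos (u_h - πu) q
    have c2 := bilin_cauchy_schwarz s_p hsp_symm hsp_pos (πu - u) q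
    rw [e1] at c1; rw [e2] at c2
    have hq0 : (0:ℝ) ≤ Real.sqrt (s_p q q) := Real.sqrt_nonneg _
    have b1 := mul_le_mul_of_nonneg_left hψ3 hS0
    have b2 := mul_le_mul_of_nonneg_left hψ3 hI0
    linarith [hsplit, c1, c2, b1, b2]
  have hZ : ‖z_h‖ ≤ C₁ * h * (c_a * Real.sqrt (s_a z_h z_h) + ε * ‖z_h‖)
      + C₂ * h * (Real.sqrt (s_p (πu - u_h) (πu - u_h))
        + Real.sqrt (s_p (u - πu) (u - πu))) := by
    have hsplitZ : (‖z_h‖ : ℝ) ^ 2 = a_h (ψ - q) z_h + s_p (u_h - u) q := by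
      rw [← hGO2 q hqV, ← hψ1, map_sub, LinearMap.sub_apply]; ring
    have hR0 : 0 ≤ C₁ * h * (c_a * Real.sqrt (s_a z_h z_h) + ε * ‖z_h‖)
        + C₂ * h * (Real.sqrt (s_p (πu - u_h) (πu - u_h))
          + Real.sqrt (s_p (u - πu) (u - πu))) := by
      have := mul_nonneg (mul_nonneg hC1 hh.le)
        (add_nonneg (mul_nonneg hca hT0) (mul_nonneg hε hZ0))
      have := mul_nonneg (mul_nonneg hC2 hh.le) (add_nonneg hS0 hI0)
      linarith
    rcases eq_or_lt_of_le hZ0 with h0 | h0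
    · linarith
    · have hmul : ‖z_h‖ * ‖z_h‖
          ≤ ‖z_h‖ * (C₁ * h * (c_a * Real.sqrt (s_a z_h z_h) + ε * ‖z_h‖)
            + C₂ * h * (Real.sqrt (s_p (πu - u_h) (πu - u_h))
              + Real.sqrt (s_p (u - πu) (u - πu)))) := by
        linarith [hsplitZ, hψ2, hqle]
      exact le_of_mul_le_mul_left hmul h0
  -- apply the real-arithmetic lemma
  have hmain := real_alg c_a C₁ C₂ C₃ C₄ h ε (h ^ k * M) ‖u - u_h‖ ‖z_h‖
    (Real.sqrt (s_p (πu - u_h) (πu - u_h))) (Real.sqrt (s_a z_h z_h))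
    (Real.sqrt (s_p (u - πu) (u - πu))) K
    hca hC1 hC2 hC3 hC4 hh.le hε hA0 hE0 hZ0 hS0 hT0 hI0 hKdef hE hZ
    (by rw [← mul_assoc]; exact hinterp) hstab hsmall
  calc ‖u - u_h‖ + ‖z_h‖ ≤ 4 * K * (h * (h ^ k * M)) := hmain
    _ = 4 * K * h ^ (k + 1) * M := by rw [pow_succ]; ring
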